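/- Let H ∈ (1/2, 1) and set α_H = H(2H−1). There exists a constant C > 0, depending only on H, such that for every δ ∈ [0, H], every λ > 0 and all 0 ≤ s < t, one has α_H λ^{2δ} ∫_s^t ∫_s^v e^{−λ(2t−u−v)} (v−u)^{2H−2} du dv ≤ C (t−s)^{2(H−δ)}. -/

import Mathlib

open MeasureTheory Set Real

lemma ioo_comp_sub (f : ℝ → ℝ) {s v : ℝ} (h : s ≤ v) :
    ∫ u in Set.Ioo s v, f (v - u) = ∫ x in Set.Ioc 0 (v - s), f x := by
  rw [← MeasureTheory.integral_Ioc_eq_integral_Ioo, ← intervalIntegral.integral_of_le h,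
    intervalIntegral.integral_comp_sub_left f v, sub_self,
    intervalIntegral.integral_of_le (by linarith)]

lemma pow_int_val {r s v : ℝ} (hr : -1 < r) (h : s ≤ v) :
    ∫ u in Set.Ioo s v, (v - u) ^ r = (v - s) ^ (r + 1) / (r + 1) := by
  rw [ioo_comp_sub (fun x => x ^ r) h, ← intervalIntegral.integral_of_le (by linarith),
    integral_rpow (Or.inl hr), Real.zero_rpow (by linarith), sub_zero]

lemma pow_int_integrable {r s v : ℝ} (hr : -1 < r) :
    MeasureTheory.IntegrableOn (fun u => (v - u) ^ r) (Set.Ioo s v) := by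
  rcases le_or_gt s v with h | h
  · have h1 : IntervalIntegrable (fun x : ℝ => x ^ r) volume 0 (v - s) :=
      intervalIntegral.intervalIntegrable_rpow' hr
    have h2 := h1.comp_sub_left v
    rw [sub_zero, sub_sub_cancel] at h2
    exact ((intervalIntegrable_iff_integrableOn_Ioo_of_le h).mp h2.symm)
  · simp [Set.Ioo_eq_empty_of_le h.le]

lemma exp_int_le {c T : ℝ} (hc : 0 < c) (hT : 0 ≤ T) :
    ∫ x in Set.Ioc 0 T, Real.exp (-(c * x)) ≤ 1 / c := by
  rw [← intervalIntegral.integral_of_le hT]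
  have hc' : (-c) ≠ 0 := by linarith
  have h1 : ∫ x in (0:ℝ)..T, Real.exp (-(c*x)) = (1 - Real.exp (-(c*T)))/c := by
    have e : ∀ x : ℝ, Real.exp (-(c*x)) = Real.exp ((-c)*x) := fun x => by ring_nf
    simp only [e]
    rw [intervalIntegral.integral_comp_mul_left Real.exp hc', mul_zero,
      integral_exp, Real.exp_zero, smul_eq_mul]
    field_simp
    ring_nf
  rw [h1]
  have := Real.exp_pos (-(c*T))
  rw [div_le_div_iff₀ hc hc]
  nlinarith

theorem stmt_4 (H : ℝ) (hH : H ∈ Set.Ioo (1/2 : ℝ) 1) :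
    ∃ C : ℝ, 0 < C ∧ ∀ δ : ℝ, δ ∈ Set.Icc 0 H → ∀ l : ℝ, 0 < l →
      ∀ s t : ℝ, 0 ≤ s → s < t →
      H * (2*H - 1) * l ^ (2 * δ) *
        (∫ v in Set.Ioo s t, ∫ u in Set.Ioo s v,
          Real.exp (-l * (2*t - u - v)) * (v - u) ^ (2*H - 2))
        ≤ C * (t - s) ^ (2 * (H - δ)) := by
  obtain ⟨hH1, hH2⟩ := hH
  have hH0 : (0:ℝ) < H := by linarith
  set G := Real.Gamma (2*H - 1) with hGdef
  have hG : 0 < G := Real.Gamma_pos_of_pos (by linarith)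
  set C1 : ℝ := 1 / ((2*H - 1) * (2*H)) with hC1def
  have hC1 : 0 < C1 := by
    apply div_pos one_pos; nlinarith
  set C2 : ℝ := G / 2 with hC2def
  have hC2 : 0 < C2 := by positivity
  set M : ℝ := max C1 C2 with hMdef
  have hM : 0 < M := lt_max_of_lt_left hC1
  have hpos : (0:ℝ) < H * (2*H - 1) := by nlinarith
  refine ⟨H * (2*H - 1) * M, mul_pos hpos hM, ?_⟩
  intro d hd l hl s t hs0 hst
  obtain ⟨hd0, hdH⟩ := hd
  have hT : 0 < t - s := by linarith
  set I : ℝ := ∫ v in Set.Ioo s t, ∫ u in Set.Ioo s v,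
      Real.exp (-l * (2*t - u - v)) * (v - u) ^ (2*H - 2) with hIdef
  set f : ℝ → ℝ := fun v => ∫ u in Set.Ioo s v,
      Real.exp (-l * (2*t - u - v)) * (v - u) ^ (2*H - 2) with hfdef
  have hfnn : ∀ v, 0 ≤ f v := by
    intro v
    apply MeasureTheory.setIntegral_nonneg measurableSet_Ioo
    intro u hu
    have : (0:ℝ) ≤ v - u := by linarith [hu.2]
    positivity
  have hInn : 0 ≤ I := MeasureTheory.setIntegral_nonneg measurableSet_Ioo fun v _ => hfnn v
  -- Bound A
  have keyA : ∀ v ∈ Set.Ioo s t, f v ≤ (v - s) ^ (2*H - 1) / (2*H - 1) := by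
    intro v hv
    have hsv : s < v := hv.1
    have h1 : f v ≤ ∫ u in Set.Ioo s v, (v - u) ^ (2*H - 2) := by
      apply MeasureTheory.integral_mono_of_nonneg
      · filter_upwards [ae_restrict_mem measurableSet_Ioo] with u hu
        have : (0:ℝ) ≤ v - u := by linarith [hu.2]
        positivity
      · exact pow_int_integrable (by linarith)
      · filter_upwards [ae_restrict_mem measurableSet_Ioo] with u hu
        have hvu : (0:ℝ) ≤ v - u := by linarith [hu.2]
        have he : Real.exp (-l * (2*t - u - v)) ≤ 1 := by
          apply Real.exp_le_one_iff.mpr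
          have : 0 < 2*t - u - v := by
            have := hu.2; have := hv.2; nlinarith
          nlinarith
        calc Real.exp (-l * (2*t - u - v)) * (v - u) ^ (2*H - 2)
            ≤ 1 * (v - u) ^ (2*H - 2) := by
              apply mul_le_mul_of_nonneg_right he (Real.rpow_nonneg hvu _)
          _ = (v - u) ^ (2*H - 2) := one_mul _
    have e : 2*H - 2 + 1 = 2*H - 1 := by ring
    calc f v ≤ ∫ u in Set.Ioo s v, (v - u) ^ (2*H - 2) := h1
      _ = (v - s) ^ (2*H - 2 + 1) / (2*H - 2 + 1) := pow_int_val (by linarith) hsv.le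
      _ = (v - s) ^ (2*H - 1) / (2*H - 1) := by rw [e]
  have boundA : I ≤ C1 * (t - s) ^ (2*H) := by
    have hgi : MeasureTheory.IntegrableOn
        (fun v => (v - s) ^ (2*H - 1) / (2*H - 1)) (Set.Ioo s t) := by
      apply MeasureTheory.Integrable.div_const
      have h1 : IntervalIntegrable (fun x : ℝ => x ^ (2*H-1)) volume 0 (t - s) :=
        intervalIntegral.intervalIntegrable_rpow' (by linarith)
      have h2 := h1.comp_sub_right s
      rw [zero_add, sub_add_cancel] at h2
      exact (intervalIntegrable_iff_integrableOn_Ioo_of_le hst.le).mp h2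
    have h1 : I ≤ ∫ v in Set.Ioo s t, (v - s) ^ (2*H - 1) / (2*H - 1) := by
      apply MeasureTheory.integral_mono_of_nonneg
      · filter_upwards with v using hfnn v
      · exact hgi
      · filter_upwards [ae_restrict_mem measurableSet_Ioo] with v hv using keyA v hv
    have h2 : ∫ v in Set.Ioo s t, (v - s) ^ (2*H - 1) / (2*H - 1)
        = C1 * (t - s) ^ (2*H) := by
      rw [MeasureTheory.integral_div]
      have h3 : ∫ v in Set.Ioo s t, (v - s) ^ (2*H - 1)
          = (t - s) ^ (2*H) / (2*H) := by
        have e : 2*H - 1 + 1 = 2*H := by ring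
        rw [← MeasureTheory.integral_Ioc_eq_integral_Ioo,
          ← intervalIntegral.integral_of_le hst.le,
          intervalIntegral.integral_comp_sub_right (fun x => x ^ (2*H - 1)) s, sub_self,
          integral_rpow (Or.inl (by linarith : (-1:ℝ) < 2*H-1)),
          Real.zero_rpow (by linarith : 2*H-1+1 ≠ 0), sub_zero, e]
      rw [h3, hC1def]
      field_simp
    linarith
  -- Bound B
  have hGI : MeasureTheory.IntegrableOn
      (fun x : ℝ => x ^ (2*H - 2) * Real.exp (-(l * x))) (Set.Ioi (0:ℝ)) := by
    have := integrableOn_rpow_mul_exp_neg_mul_rpow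
      (s := 2*H - 2) (p := 1) (b := l) (by linarith) one_pos hl
    simpa [Real.rpow_one] using this
  have hGval : ∫ x in Set.Ioi (0:ℝ), x ^ (2*H - 2) * Real.exp (-(l * x))
      = (1/l) ^ (2*H - 1) * G := by
    have h := Real.integral_rpow_mul_exp_neg_mul_Ioi
      (a := 2*H - 1) (r := l) (by linarith) hl
    have e : 2*H - 1 - 1 = 2*H - 2 := by ring
    rw [e] at h
    exact h
  have keyB : ∀ v ∈ Set.Ioo s t,
      f v ≤ Real.exp (-(2*l * (t - v))) * ((1/l) ^ (2*H - 1) * G) := by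
    intro v hv
    have hsv : s < v := hv.1
    have h0 : f v = Real.exp (-(2*l * (t - v))) *
        ∫ u in Set.Ioo s v, (v - u) ^ (2*H - 2) * Real.exp (-(l * (v - u))) := by
      rw [hfdef, ← MeasureTheory.integral_const_mul]
      apply MeasureTheory.setIntegral_congr_fun measurableSet_Ioo
      intro u _
      simp only []
      rw [mul_comm ((v-u) ^ (2*H-2)) (Real.exp (-(l * (v - u)))), ← mul_assoc,
        ← Real.exp_add]
      congr 1
      ring
    have h1 : ∫ u in Set.Ioo s v, (v - u) ^ (2*H - 2) * Real.exp (-(l * (v - u)))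
        ≤ (1/l) ^ (2*H - 1) * G := by
      have h2 : ∫ u in Set.Ioo s v, (v - u) ^ (2*H - 2) * Real.exp (-(l * (v - u)))
          = ∫ x in Set.Ioc 0 (v - s), x ^ (2*H - 2) * Real.exp (-(l * x)) :=
        ioo_comp_sub (fun x => x ^ (2*H - 2) * Real.exp (-(l * x))) hsv.le
      rw [h2, ← hGval]
      apply MeasureTheory.setIntegral_mono_set hGI
      · filter_upwards [ae_restrict_mem measurableSet_Ioi] with x hx
        have : (0:ℝ) < x := hx
        positivity
      · exact HasSubset.Subset.eventuallyLE Set.Ioc_subset_Ioi_self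
    rw [h0]
    exact mul_le_mul_of_nonneg_left h1 (Real.exp_pos _).le
  have boundB : I ≤ C2 * l ^ (-(2*H)) := by
    set K : ℝ := (1/l) ^ (2*H - 1) * G with hKdef
    have hK : 0 ≤ K := by positivity
    have hgi : MeasureTheory.IntegrableOn
        (fun v => Real.exp (-(2*l * (t - v))) * K) (Set.Ioo s t) := by
      apply MeasureTheory.Integrable.mul_const
      apply MeasureTheory.IntegrableOn.mono_set _ Set.Ioo_subset_Icc_self
      have hcont : Continuous fun v : ℝ => Real.exp (-(2*l*(t - v))) :=
        Real.continuous_exp.comp ((continuous_const.mul (continuous_const.sub continuous_id)).neg)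
      exact hcont.integrableOn_Icc
    have h1 : I ≤ ∫ v in Set.Ioo s t, Real.exp (-(2*l * (t - v))) * K := by
      apply MeasureTheory.integral_mono_of_nonneg
      · filter_upwards with v using hfnn v
      · exact hgi
      · filter_upwards [ae_restrict_mem measurableSet_Ioo] with v hv using keyB v hv
    have h2 : ∫ v in Set.Ioo s t, Real.exp (-(2*l * (t - v))) * K
        ≤ 1 / (2*l) * K := by
      rw [MeasureTheory.integral_mul_const]
      apply mul_le_mul_of_nonneg_right _ hK
      have h3 : ∫ v in Set.Ioo s t, Real.exp (-(2*l * (t - v)))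
          = ∫ x in Set.Ioc 0 (t - s), Real.exp (-(2*l * x)) :=
        ioo_comp_sub (fun x => Real.exp (-(2*l * x))) hst.le
      rw [h3]
      exact exp_int_le (by linarith) hT.le
    have h4 : 1 / (2*l) * K = C2 * l ^ (-(2*H)) := by
      have e2 : l ^ (-(2*H)) = (l ^ (2*H - 1))⁻¹ * l⁻¹ := by
        rw [Real.rpow_neg hl.le, ← mul_inv, ← Real.rpow_add_one hl.ne']
        norm_num
      rw [hKdef, hC2def, e2, show (1:ℝ)/l = l⁻¹ from one_div l, Real.inv_rpow hl.le]
      ring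
    linarith
  -- Interpolation
  rcases hInn.eq_or_lt with hI0 | hIpos
  · rw [← hI0, mul_zero]
    have h5 : (0:ℝ) ≤ H * (2*H - 1) * M := (mul_pos hpos hM).le
    exact mul_nonneg h5 (Real.rpow_nonneg hT.le _)
  · set θ : ℝ := d / H with hθdef
    have hθ0 : 0 ≤ θ := div_nonneg hd0 hH0.le
    have hθ1 : θ ≤ 1 := (div_le_one hH0).mpr hdH
    have hHθ : H * θ = d := by
      rw [hθdef]; field_simp
    have hIsplit : I = I ^ (1 - θ) * I ^ θ := by
      rw [← Real.rpow_add hIpos]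
      norm_num
    have hbA : I ^ (1 - θ) ≤ (C1 * (t - s) ^ (2*H)) ^ (1 - θ) :=
      Real.rpow_le_rpow hInn boundA (by linarith)
    have hbB : I ^ θ ≤ (C2 * l ^ (-(2*H))) ^ θ :=
      Real.rpow_le_rpow hInn boundB hθ0
    have hprod : I ≤ (C1 * (t - s) ^ (2*H)) ^ (1 - θ) * (C2 * l ^ (-(2*H))) ^ θ := by
      rw [hIsplit]
      exact mul_le_mul hbA hbB (Real.rpow_nonneg hInn _)
        (Real.rpow_nonneg (by positivity) _)
    have e3 : 2*H*(1 - θ) = 2*(H - d) := by linear_combination (-2) * hHθ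
    have e5 : -(2*H)*θ = -(2*d) := by linear_combination (-2) * hHθ
    have e6 : l ^ (2*d) * l ^ (-(2*d)) = 1 := by
      rw [← Real.rpow_add hl]
      norm_num
    have hexpand : l ^ (2*d) * ((C1 * (t - s) ^ (2*H)) ^ (1 - θ) * (C2 * l ^ (-(2*H))) ^ θ)
        = (C1 ^ (1 - θ) * C2 ^ θ) * (t - s) ^ (2*(H - d)) := by
      rw [Real.mul_rpow hC1.le (Real.rpow_nonneg hT.le _),
        Real.mul_rpow hC2.le (Real.rpow_nonneg hl.le _),
        ← Real.rpow_mul hT.le, ← Real.rpow_mul hl.le, e3, e5]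
      linear_combination (C1 ^ (1-θ) * (t-s) ^ (2*(H-d)) * C2 ^ θ) * e6
    have hmax : C1 ^ (1 - θ) * C2 ^ θ ≤ M := by
      have := mul_le_mul (Real.rpow_le_rpow hC1.le (le_max_left C1 C2) (show (0:ℝ) ≤ 1 - θ by linarith))
        (Real.rpow_le_rpow hC2.le (le_max_right C1 C2) hθ0)
        (Real.rpow_nonneg hC2.le _) (Real.rpow_nonneg hM.le _)
      calc C1 ^ (1 - θ) * C2 ^ θ ≤ M ^ (1 - θ) * M ^ θ := this
        _ = M := by rw [← Real.rpow_add hM]; norm_num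
    have step : l ^ (2*d) * I ≤ M * (t - s) ^ (2*(H - d)) := by
      calc l ^ (2*d) * I
          ≤ l ^ (2*d) * ((C1 * (t - s) ^ (2*H)) ^ (1 - θ) * (C2 * l ^ (-(2*H))) ^ θ) :=
            mul_le_mul_of_nonneg_left hprod (Real.rpow_nonneg hl.le _)
        _ = (C1 ^ (1 - θ) * C2 ^ θ) * (t - s) ^ (2*(H - d)) := hexpand
        _ ≤ M * (t - s) ^ (2*(H - d)) :=
            mul_le_mul_of_nonneg_right hmax (Real.rpow_nonneg hT.le _)
    calc H * (2*H - 1) * l ^ (2*d) * I = H * (2*H - 1) * (l ^ (2*d) * I) := by ring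
      _ ≤ H * (2*H - 1) * (M * (t - s) ^ (2*(H - d))) :=
          mul_le_mul_of_nonneg_left step hpos.le
      _ = H * (2*H - 1) * M * (t - s) ^ (2*(H - d)) := by ring
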